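/- Define the 2×2 real symmetric positive semidefinite matrices A_1 = [[1/4, √3/4], [√3/4, 3/4]], A_2 = [[1/4, −√3/4], [−√3/4, 3/4]], A_3 = [[1, 0], [0, 0]]. Then for every integer K ≥ 2, ‖W_SS(3,K,A_1,A_2,A_3)‖ = 1/(2·8^K) > 1/16^K = ‖W_RS(3,K,A_1,A_2,A_3)‖; in particular, the inequality ‖W_SS‖ ≤ ‖W_RS‖ fails for these positive semidefinite matrices whenever K ≥ 2. -/

import Mathlib

/-- Spectral norm (operator 2-norm) of a real square matrix. -/
noncomputable def specNorm {d : ℕ} (A : Matrix (Fin d) (Fin d) ℝ) : ℝ :=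
  ‖Matrix.toEuclideanCLM (𝕜 := ℝ) A‖

/-- Ordered product `A (σ 1) * A (σ 2) * ⋯ * A (σ n)` (increasing index order). -/
noncomputable def permProd {n d : ℕ} (A : Fin n → Matrix (Fin d) (Fin d) ℝ)
    (σ : Equiv.Perm (Fin n)) : Matrix (Fin d) (Fin d) ℝ :=
  (List.ofFn fun i => A (σ i)).prod

/-- Single-shuffle mean: `(1/n!) Σ_σ (Π_i A_{σ(i)})^K`. -/
noncomputable def WSS (n K : ℕ) {d : ℕ} (A : Fin n → Matrix (Fin d) (Fin d) ℝ) :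
    Matrix (Fin d) (Fin d) ℝ :=
  ((n.factorial : ℝ)⁻¹) • ∑ σ : Equiv.Perm (Fin n), (permProd A σ) ^ K

/-- Random-reshuffle mean: `((1/n!) Σ_σ Π_i A_{σ(i)})^K`. -/
noncomputable def WRS (n K : ℕ) {d : ℕ} (A : Fin n → Matrix (Fin d) (Fin d) ℝ) :
    Matrix (Fin d) (Fin d) ℝ :=
  (((n.factorial : ℝ)⁻¹) • ∑ σ : Equiv.Perm (Fin n), permProd A σ) ^ K

/-- GD mean: `((1/n) Σ_i A_i)^(nK)`. -/
noncomputable def WGD (n K : ℕ) {d : ℕ} (A : Fin n → Matrix (Fin d) (Fin d) ℝ) :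
    Matrix (Fin d) (Fin d) ℝ :=
  (((n : ℝ)⁻¹) • ∑ i : Fin n, A i) ^ (n * K)
open Matrix

/-- The three 2×2 positive semidefinite matrices of the counterexample. -/
noncomputable def cexA : Fin 3 → Matrix (Fin 2) (Fin 2) ℝ :=
  ![!![1 / 4, Real.sqrt 3 / 4; Real.sqrt 3 / 4, 3 / 4],
    !![1 / 4, -(Real.sqrt 3) / 4; -(Real.sqrt 3) / 4, 3 / 4],
    !![1, 0; 0, 0]]
set_option synthInstance.maxHeartbeats 1000000 in
private lemma specNorm_smul_one (c : ℝ) :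
    specNorm (c • (1 : Matrix (Fin 2) (Fin 2) ℝ)) = |c| := by
  unfold specNorm
  rw [_root_.map_smul, _root_.map_one,
    norm_smul c (1 : EuclideanSpace ℝ (Fin 2) →L[ℝ] EuclideanSpace ℝ (Fin 2)),
    norm_one]
  simp [Real.norm_eq_abs]

private lemma permProd3 (A : Fin 3 → Matrix (Fin 2) (Fin 2) ℝ) (σ : Equiv.Perm (Fin 3)) :
    permProd A σ = A (σ 0) * (A (σ 1) * A (σ 2)) := by
  simp [permProd, List.ofFn_succ]

private lemma hs3 : Real.sqrt 3 * Real.sqrt 3 = 3 := Real.mul_self_sqrt (by norm_num)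

private lemma univ_perm3 : (Finset.univ : Finset (Equiv.Perm (Fin 3))) =
    {1, Equiv.swap 0 1, Equiv.swap 0 2, Equiv.swap 1 2,
     Equiv.swap 0 1 * Equiv.swap 1 2, Equiv.swap 1 2 * Equiv.swap 0 1} := by decide

private lemma P1 : permProd cexA 1 = !![-1/8, 0; -(Real.sqrt 3)/8, 0] := by
  rw [permProd3]
  show cexA 0 * (cexA 1 * cexA 2) = _
  simp only [cexA, Matrix.cons_val_zero, Matrix.cons_val_one, Matrix.head_cons,
    Matrix.cons_val_two, Matrix.tail_cons, Matrix.mul_fin_two]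
  ext i j; fin_cases i <;> fin_cases j <;> simp <;> nlinarith [hs3]

private lemma P2 : permProd cexA (Equiv.swap 0 1) = !![-1/8, 0; Real.sqrt 3/8, 0] := by
  rw [permProd3]
  have h0 : (Equiv.swap 0 1 : Equiv.Perm (Fin 3)) 0 = 1 := by decide
  have h1 : (Equiv.swap 0 1 : Equiv.Perm (Fin 3)) 1 = 0 := by decide
  have h2 : (Equiv.swap 0 1 : Equiv.Perm (Fin 3)) 2 = 2 := by decide
  rw [h0, h1, h2]
  simp only [cexA, Matrix.cons_val_zero, Matrix.cons_val_one, Matrix.head_cons,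
    Matrix.cons_val_two, Matrix.tail_cons, Matrix.mul_fin_two]
  ext i j; fin_cases i <;> fin_cases j <;> simp <;> nlinarith [hs3]

private lemma P3 : permProd cexA (Equiv.swap 0 2) = !![-1/8, -(Real.sqrt 3)/8; 0, 0] := by
  rw [permProd3]
  have h0 : (Equiv.swap 0 2 : Equiv.Perm (Fin 3)) 0 = 2 := by decide
  have h1 : (Equiv.swap 0 2 : Equiv.Perm (Fin 3)) 1 = 1 := by decide
  have h2 : (Equiv.swap 0 2 : Equiv.Perm (Fin 3)) 2 = 0 := by decide
  rw [h0, h1, h2]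
  simp only [cexA, Matrix.cons_val_zero, Matrix.cons_val_one, Matrix.head_cons,
    Matrix.cons_val_two, Matrix.tail_cons, Matrix.mul_fin_two]
  ext i j; fin_cases i <;> fin_cases j <;> simp <;> nlinarith [hs3]

private lemma P4 : permProd cexA (Equiv.swap 1 2) =
    !![1/16, -(Real.sqrt 3)/16; Real.sqrt 3/16, -3/16] := by
  rw [permProd3]
  have h0 : (Equiv.swap 1 2 : Equiv.Perm (Fin 3)) 0 = 0 := by decide
  have h1 : (Equiv.swap 1 2 : Equiv.Perm (Fin 3)) 1 = 2 := by decide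
  have h2 : (Equiv.swap 1 2 : Equiv.Perm (Fin 3)) 2 = 1 := by decide
  rw [h0, h1, h2]
  simp only [cexA, Matrix.cons_val_zero, Matrix.cons_val_one, Matrix.head_cons,
    Matrix.cons_val_two, Matrix.tail_cons, Matrix.mul_fin_two]
  ext i j; fin_cases i <;> fin_cases j <;> simp <;> nlinarith [hs3]

private lemma P5 : permProd cexA (Equiv.swap 0 1 * Equiv.swap 1 2) =
    !![1/16, Real.sqrt 3/16; -(Real.sqrt 3)/16, -3/16] := by
  rw [permProd3]
  have h0 : (Equiv.swap 0 1 * Equiv.swap 1 2 : Equiv.Perm (Fin 3)) 0 = 1 := by decide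
  have h1 : (Equiv.swap 0 1 * Equiv.swap 1 2 : Equiv.Perm (Fin 3)) 1 = 2 := by decide
  have h2 : (Equiv.swap 0 1 * Equiv.swap 1 2 : Equiv.Perm (Fin 3)) 2 = 0 := by decide
  rw [h0, h1, h2]
  simp only [cexA, Matrix.cons_val_zero, Matrix.cons_val_one, Matrix.head_cons,
    Matrix.cons_val_two, Matrix.tail_cons, Matrix.mul_fin_two]
  ext i j; fin_cases i <;> fin_cases j <;> simp <;> nlinarith [hs3]

private lemma P6 : permProd cexA (Equiv.swap 1 2 * Equiv.swap 0 1) =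
    !![-1/8, Real.sqrt 3/8; 0, 0] := by
  rw [permProd3]
  have h0 : (Equiv.swap 1 2 * Equiv.swap 0 1 : Equiv.Perm (Fin 3)) 0 = 2 := by decide
  have h1 : (Equiv.swap 1 2 * Equiv.swap 0 1 : Equiv.Perm (Fin 3)) 1 = 0 := by decide
  have h2 : (Equiv.swap 1 2 * Equiv.swap 0 1 : Equiv.Perm (Fin 3)) 2 = 1 := by decide
  rw [h0, h1, h2]
  simp only [cexA, Matrix.cons_val_zero, Matrix.cons_val_one, Matrix.head_cons,
    Matrix.cons_val_two, Matrix.tail_cons, Matrix.mul_fin_two]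
  ext i j; fin_cases i <;> fin_cases j <;> simp <;> nlinarith [hs3]

private lemma sum_permProd :
    ∑ σ : Equiv.Perm (Fin 3), permProd cexA σ
      = (-(3/8) : ℝ) • (1 : Matrix (Fin 2) (Fin 2) ℝ) := by
  rw [univ_perm3]
  rw [Finset.sum_insert (by decide), Finset.sum_insert (by decide),
    Finset.sum_insert (by decide), Finset.sum_insert (by decide),
    Finset.sum_insert (by decide), Finset.sum_singleton]
  rw [P1, P2, P3, P4, P5, P6]
  ext i j; fin_cases i <;> fin_cases j <;>
    simp [Matrix.one_apply] <;> ring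

private lemma sq_permProd (σ : Equiv.Perm (Fin 3)) :
    permProd cexA σ * permProd cexA σ = (-(1/8) : ℝ) • permProd cexA σ := by
  have h : σ = 1 ∨ σ = Equiv.swap 0 1 ∨ σ = Equiv.swap 0 2 ∨ σ = Equiv.swap 1 2 ∨
      σ = Equiv.swap 0 1 * Equiv.swap 1 2 ∨ σ = Equiv.swap 1 2 * Equiv.swap 0 1 := by
    have := Finset.mem_univ σ
    rw [univ_perm3] at this
    simpa using this
  rcases h with rfl | rfl | rfl | rfl | rfl | rfl <;>
    [rw [P1]; rw [P2]; rw [P3]; rw [P4]; rw [P5]; rw [P6]] <;>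
    rw [Matrix.mul_fin_two] <;>
    (ext i j; fin_cases i <;> fin_cases j <;> simp <;> nlinarith [hs3])

private lemma pow_of_sq (M : Matrix (Fin 2) (Fin 2) ℝ) (t : ℝ)
    (h : M * M = t • M) : ∀ K, 1 ≤ K → M ^ K = t ^ (K - 1) • M := by
  intro K hK
  induction K with
  | zero => omega
  | succ n ih =>
    rcases Nat.eq_or_lt_of_le hK with h1 | h1
    · simp [← h1]
    · have hn : 1 ≤ n := by omega
      rw [pow_succ, ih hn, Matrix.smul_mul, h, smul_smul]
      have : t ^ (n - 1) * t = t ^ n := by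
        conv_rhs => rw [show n = (n - 1) + 1 by omega]
        rw [pow_succ]
      rw [this]
      simp

private lemma WSS_eq (K : ℕ) (hK : 1 ≤ K) :
    WSS 3 K cexA = ((6 : ℝ)⁻¹ * ((-(1/8) : ℝ) ^ (K - 1) * (-(3/8)))) •
      (1 : Matrix (Fin 2) (Fin 2) ℝ) := by
  unfold WSS
  have : ∑ σ : Equiv.Perm (Fin 3), permProd cexA σ ^ K
      = ((-(1/8) : ℝ) ^ (K - 1)) • ∑ σ : Equiv.Perm (Fin 3), permProd cexA σ := by
    rw [Finset.smul_sum]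
    exact Finset.sum_congr rfl fun σ _ => pow_of_sq _ _ (sq_permProd σ) K hK
  rw [this, sum_permProd, smul_smul, smul_smul]
  norm_num [Nat.factorial]
  ring_nf

private lemma WRS_eq (K : ℕ) :
    WRS 3 K cexA = ((-(1/16) : ℝ) ^ K) • (1 : Matrix (Fin 2) (Fin 2) ℝ) := by
  unfold WRS
  rw [sum_permProd, smul_smul]
  have : ((3).factorial : ℝ)⁻¹ * (-(3/8)) = -(1/16) := by
    norm_num [Nat.factorial]
  rw [this, smul_pow, one_pow]

theorem statement11 (K : ℕ) (hK : 2 ≤ K) :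
    specNorm (WSS 3 K cexA) = 1 / (2 * 8 ^ K) ∧
    (1 / (16 ^ K) : ℝ) < 1 / (2 * 8 ^ K) ∧
    specNorm (WRS 3 K cexA) = 1 / (16 ^ K) ∧
    ¬ specNorm (WSS 3 K cexA) ≤ specNorm (WRS 3 K cexA) := by
  obtain ⟨m, rfl⟩ : ∃ m, K = m + 2 := ⟨K - 2, by omega⟩
  have hss : specNorm (WSS 3 (m + 2) cexA) = 1 / (2 * 8 ^ (m + 2)) := by
    rw [WSS_eq (m + 2) (by omega), specNorm_smul_one]
    rw [abs_mul, abs_mul, abs_pow]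
    have h8 : |(-(1/8) : ℝ)| = 1/8 := by norm_num
    rw [h8]
    rw [show (m + 2) - 1 = m + 1 from rfl]
    rw [show (8 : ℝ) ^ (m + 2) = 8 ^ (m + 1) * 8 by ring]
    have : ((1:ℝ)/8) ^ (m+1) = (8 ^ (m+1))⁻¹ := by
      rw [one_div, inv_pow]
    rw [this]
    have h8p : (0:ℝ) < 8 ^ (m+1) := by positivity
    field_simp
    rw [show |(1/6:ℝ)| = 1/6 by norm_num, show |(-(3/8):ℝ)| = 3/8 by norm_num]
    ring
  have hrs : specNorm (WRS 3 (m + 2) cexA) = 1 / (16 ^ (m + 2)) := by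
    rw [WRS_eq, specNorm_smul_one, abs_pow,
      show |(-(1/16):ℝ)| = 1/16 by norm_num, one_div, inv_pow, one_div]
  have hlt : (1 / (16 ^ (m + 2)) : ℝ) < 1 / (2 * 8 ^ (m + 2)) := by
    apply one_div_lt_one_div_of_lt
    · positivity
    · have : (16 : ℝ) ^ (m + 2) = 2 ^ (m + 2) * 8 ^ (m + 2) := by
        rw [← mul_pow]; norm_num
      rw [this]
      have h2 : (2:ℝ) < 2 ^ (m + 2) := by
        calc (2:ℝ) < 4 := by norm_num
        _ ≤ 2 ^ (m + 2) := by
          calc (4:ℝ) = 2 ^ 2 := by norm_num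
          _ ≤ 2 ^ (m + 2) := by
            apply pow_le_pow_right₀ (by norm_num); omega
      have h8p : (0:ℝ) < 8 ^ (m + 2) := by positivity
      nlinarith
  exact ⟨hss, hlt, hrs, by rw [hss, hrs]; exact not_le_of_gt hlt⟩
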